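/- arXiv:1806.03596 — 2 statements merged into one kernel-verified Lean document; each statement's English description precedes it below -/
import Mathlib

section
/- Let (W_j, Θ_j) be a gf-orthonormal basis for H with respect to {v_j} and let Λ = (W_j, Λ_j, v_j) be a g-fusion frame for H with the same weights. Then there exists a bounded surjective operator V : H → H such that Λ_j π_{W_j} = Θ_j π_{W_j} V* for all j ∈ J; V is given by V f = Σ_{j∈J} v_j² π_{W_j} Λ_j* Θ_j π_{W_j} f (the series converging unconditionally), and ‖V‖ ≤ √B where B is an upper g-fusion frame bound for Λ. -/
open scoped InnerProductSpace
open ContinuousLinearMap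

/-- The orthogonal projection of `H` onto the closed subspace `W j`, as a map `H →L[ℂ] H`. -/
noncomputable def gfProj {H : Type*} [NormedAddCommGroup H] [InnerProductSpace ℂ H]
    {J : Type*} (W : J → Submodule ℂ H) [∀ j, CompleteSpace (W j)] (j : J) : H →L[ℂ] H :=
  (W j).subtypeL.comp ((W j).orthogonalProjection)

set_option maxHeartbeats 1000000 in
/-- given a gf-orthonormal basis `(W_j, Θ_j)` and a g-fusion frame
`Λ = (W_j, Λ_j, v_j)` with the same weights and upper bound `B`, there is a bounded
surjective `V : H → H` with `V f = Σ_j v_j² π_{W_j} Λ_j* Θ_j π_{W_j} f` (unconditionally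
convergent), `‖V‖ ≤ √B`, and `Λ_j π_{W_j} = Θ_j π_{W_j} V*` for all `j`. -/
theorem gf_frame_factors_through_orthonormal_basis
    {H : Type*} [NormedAddCommGroup H] [InnerProductSpace ℂ H] [CompleteSpace H]
    {J : Type*} [Countable J]
    {Hs : J → Type*} [∀ j, NormedAddCommGroup (Hs j)] [∀ j, InnerProductSpace ℂ (Hs j)]
    [∀ j, CompleteSpace (Hs j)]
    (W : J → Submodule ℂ H) [∀ j, CompleteSpace (W j)]
    (v : J → ℝ) (hv : ∀ j, 0 < v j)
    (Θ : ∀ j, H →L[ℂ] Hs j) (Λ : ∀ j, H →L[ℂ] Hs j)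
    (hΘ_orth_eq : ∀ j (g g' : Hs j),
        ⟪v j • gfProj W j (adjoint (Θ j) g), v j • gfProj W j (adjoint (Θ j) g')⟫_ℂ
          = ⟪g, g'⟫_ℂ)
    (hΘ_orth_ne : ∀ i j, i ≠ j → ∀ (gi : Hs i) (gj : Hs j),
        ⟪v i • gfProj W i (adjoint (Θ i) gi), v j • gfProj W j (adjoint (Θ j) gj)⟫_ℂ = 0)
    (hΘ_parseval : ∀ f : H,
        HasSum (fun j => (v j) ^ 2 * ‖Θ j (gfProj W j f)‖ ^ 2) (‖f‖ ^ 2))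
    (A B : ℝ) (hA : 0 < A) (hAB : A ≤ B)
    (hframe : ∀ f : H,
        Summable (fun j => (v j) ^ 2 * ‖Λ j (gfProj W j f)‖ ^ 2) ∧
        A * ‖f‖ ^ 2 ≤ ∑' j, (v j) ^ 2 * ‖Λ j (gfProj W j f)‖ ^ 2 ∧
        ∑' j, (v j) ^ 2 * ‖Λ j (gfProj W j f)‖ ^ 2 ≤ B * ‖f‖ ^ 2) :
    ∃ V : H →L[ℂ] H, Function.Surjective V ∧ ‖V‖ ≤ Real.sqrt B ∧
      (∀ f : H,
        HasSum (fun j => ((v j) ^ 2 : ℝ) •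
          gfProj W j (adjoint (Λ j) (Θ j (gfProj W j f)))) (V f)) ∧
      (∀ j (f : H), Λ j (gfProj W j f) = Θ j (gfProj W j (adjoint V f))) := by
  classical
  have hB : (0:ℝ) < B := lt_of_lt_of_le hA hAB
  have hsmH : ∀ (r : ℝ) (x : H), r • x = (r : ℂ) • x := fun r x =>
    RCLike.real_smul_eq_coe_smul (K := ℂ) r x
  have hsmHs : ∀ (j : J) (r : ℝ) (x : Hs j), r • x = (r : ℂ) • x := fun j r x =>
    RCLike.real_smul_eq_coe_smul (K := ℂ) r x
  have hisl : ∀ (r : ℝ) (x y : H), ⟪r • x, y⟫_ℂ = (r : ℂ) * ⟪x, y⟫_ℂ := by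
    intro r x y
    rw [hsmH, inner_smul_left]
    simp
  have hisr : ∀ (r : ℝ) (x y : H), ⟪x, r • y⟫_ℂ = (r : ℂ) * ⟪x, y⟫_ℂ := by
    intro r x y
    rw [hsmH, inner_smul_right]
  have hisls : ∀ (j : J) (r : ℝ) (x y : Hs j), ⟪r • x, y⟫_ℂ = (r : ℂ) * ⟪x, y⟫_ℂ := by
    intro j r x y
    rw [hsmHs, inner_smul_left]
    simp
  -- the projection is symmetric
  have hPsym : ∀ (j : J) (x y : H), ⟪gfProj W j x, y⟫_ℂ = ⟪x, gfProj W j y⟫_ℂ := fun j x y =>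
    (isSelfAdjoint_starProjection (W j)).isSymmetric x y
  -- basic adjoint computations
  have hΛadj : ∀ (j : J) (x : Hs j) (y : H),
      ⟪gfProj W j (adjoint (Λ j) x), y⟫_ℂ = ⟪x, Λ j (gfProj W j y)⟫_ℂ := by
    intro j x y
    rw [hPsym, adjoint_inner_left]
  have hΘadj : ∀ (j : J) (x : H) (g : Hs j),
      ⟪x, gfProj W j (adjoint (Θ j) g)⟫_ℂ = ⟪Θ j (gfProj W j x), g⟫_ℂ := by
    intro j x g
    rw [← hPsym, adjoint_inner_right]
  -- reconstruction identities coming from gf-orthonormality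
  have hrecon : ∀ (j : J) (g : Hs j),
      ((v j) ^ 2 : ℝ) • Θ j (gfProj W j (gfProj W j (adjoint (Θ j) g))) = g := by
    intro j g
    apply ext_inner_right ℂ
    intro g'
    have h := hΘ_orth_eq j g g'
    rw [hisl, hisr, hΘadj] at h
    rw [hisls, ← h]
    push_cast
    ring
  have hcross : ∀ (i j : J), i ≠ j → ∀ (g : Hs i),
      Θ j (gfProj W j (gfProj W i (adjoint (Θ i) g))) = 0 := by
    intro i j hij g
    apply ext_inner_right ℂ
    intro g'
    have h := hΘ_orth_ne i j hij g g'
    rw [hisl, hisr, hΘadj] at h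
    rcases mul_eq_zero.mp h with h | h
    · exact absurd (Complex.ofReal_eq_zero.mp h) (hv i).ne'
    rcases mul_eq_zero.mp h with h | h
    · exact absurd (Complex.ofReal_eq_zero.mp h) (hv j).ne'
    simpa using h
  -- the family of operators whose (strong) sum is `V`
  set S : J → H →L[ℂ] H := fun j =>
    ((v j) ^ 2 : ℝ) • ((gfProj W j).comp ((adjoint (Λ j)).comp ((Θ j).comp (gfProj W j))))
    with hSdef
  have hSapp : ∀ (j : J) (f : H),
      S j f = ((v j) ^ 2 : ℝ) • gfProj W j (adjoint (Λ j) (Θ j (gfProj W j f))) := by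
    intro j f; rfl
  have hΘnonneg : ∀ (f : H) (j : J), 0 ≤ (v j) ^ 2 * ‖Θ j (gfProj W j f)‖ ^ 2 := by
    intro f j; positivity
  have hΛnonneg : ∀ (f : H) (j : J), 0 ≤ (v j) ^ 2 * ‖Λ j (gfProj W j f)‖ ^ 2 := by
    intro f j; positivity
  -- key finite estimate
  have key : ∀ (f : H) (F : Finset J),
      ‖∑ j ∈ F, S j f‖ ^ 2 ≤ B * ∑ j ∈ F, (v j) ^ 2 * ‖Θ j (gfProj W j f)‖ ^ 2 := by
    intro f F
    set s := ∑ j ∈ F, S j f with hs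
    rcases eq_or_ne s 0 with h0 | h0
    · rw [h0]
      simp only [norm_zero]
      have h01 : 0 ≤ ∑ j ∈ F, (v j) ^ 2 * ‖Θ j (gfProj W j f)‖ ^ 2 :=
        Finset.sum_nonneg fun j _ => hΘnonneg f j
      nlinarith [mul_nonneg hB.le h01]
    · have hinner : ⟪s, s⟫_ℂ
          = ∑ j ∈ F, (((v j) ^ 2 : ℝ) : ℂ) * ⟪Θ j (gfProj W j f), Λ j (gfProj W j s)⟫_ℂ := by
        rw [hs, sum_inner]
        refine Finset.sum_congr rfl fun j _ => ?_
        rw [hSapp, hisl, hΛadj]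
      have h1 : ‖s‖ ^ 2 = ‖⟪s, s⟫_ℂ‖ := by
        rw [inner_self_eq_norm_sq_to_K]
        simp
      have h2 : ‖⟪s, s⟫_ℂ‖
          ≤ ∑ j ∈ F, (v j * ‖Θ j (gfProj W j f)‖) * (v j * ‖Λ j (gfProj W j s)‖) := by
        rw [hinner]
        refine (norm_sum_le _ _).trans ?_
        refine Finset.sum_le_sum fun j _ => ?_
        rw [norm_mul, Complex.norm_real]
        have hni := norm_inner_le_norm (𝕜 := ℂ) (Θ j (gfProj W j f)) (Λ j (gfProj W j s))
        calc ‖((v j) ^ 2 : ℝ)‖ * ‖⟪Θ j (gfProj W j f), Λ j (gfProj W j s)⟫_ℂ‖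
            ≤ (v j) ^ 2 * (‖Θ j (gfProj W j f)‖ * ‖Λ j (gfProj W j s)‖) := by
              rw [Real.norm_eq_abs, abs_of_nonneg (sq_nonneg _)]
              exact mul_le_mul_of_nonneg_left hni (sq_nonneg _)
          _ = (v j * ‖Θ j (gfProj W j f)‖) * (v j * ‖Λ j (gfProj W j s)‖) := by ring
      have hcs := Finset.sum_mul_sq_le_sq_mul_sq F
        (fun j => v j * ‖Θ j (gfProj W j f)‖) (fun j => v j * ‖Λ j (gfProj W j s)‖)
      set X := ∑ j ∈ F, (v j) ^ 2 * ‖Θ j (gfProj W j f)‖ ^ 2 with hX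
      have hXnn : 0 ≤ X := Finset.sum_nonneg fun j _ => hΘnonneg f j
      have hXF : ∑ j ∈ F, (v j * ‖Θ j (gfProj W j f)‖) ^ 2 = X := by
        rw [hX]; exact Finset.sum_congr rfl fun j _ => by ring
      have hYle : ∑ j ∈ F, (v j * ‖Λ j (gfProj W j s)‖) ^ 2 ≤ B * ‖s‖ ^ 2 := by
        have hsum := (hframe s).1
        have hle := Summable.sum_le_tsum F (fun j _ => hΛnonneg s j) hsum
        calc ∑ j ∈ F, (v j * ‖Λ j (gfProj W j s)‖) ^ 2
            = ∑ j ∈ F, (v j)^2 * ‖Λ j (gfProj W j s)‖^2 :=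
              Finset.sum_congr rfl fun j _ => by ring
          _ ≤ ∑' j, (v j)^2 * ‖Λ j (gfProj W j s)‖^2 := hle
          _ ≤ B * ‖s‖ ^ 2 := (hframe s).2.2
      have hb : ‖s‖ ^ 2
          ≤ ∑ j ∈ F, (v j * ‖Θ j (gfProj W j f)‖) * (v j * ‖Λ j (gfProj W j s)‖) :=
        h1.le.trans h2
      have hsq : (‖s‖ ^ 2) ^ 2 ≤ X * (B * ‖s‖ ^ 2) := by
        have hcs' : (∑ j ∈ F, (v j * ‖Θ j (gfProj W j f)‖) * (v j * ‖Λ j (gfProj W j s)‖)) ^ 2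
            ≤ X * (B * ‖s‖ ^ 2) := by
          refine hcs.trans ?_
          rw [hXF]
          exact mul_le_mul_of_nonneg_left hYle hXnn
        nlinarith [hb, hcs', sq_nonneg (‖s‖ ^ 2)]
      have hpos : 0 < ‖s‖ ^ 2 := by
        have := norm_pos_iff.mpr h0
        positivity
      have := le_of_mul_le_mul_right (by nlinarith [hsq] : ‖s‖ ^ 2 * ‖s‖ ^ 2 ≤ (B * X) * ‖s‖ ^ 2) hpos
      linarith
  -- summability of the defining series
  have hsummable : ∀ f : H, Summable fun j => S j f := by
    intro f
    rw [summable_iff_vanishing_norm]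
    intro ε hε
    have hsumΘ : Summable fun j => (v j) ^ 2 * ‖Θ j (gfProj W j f)‖ ^ 2 :=
      (hΘ_parseval f).summable
    obtain ⟨F, hF⟩ := summable_iff_vanishing_norm.mp hsumΘ (ε ^ 2 / B) (by positivity)
    refine ⟨F, fun G hG => ?_⟩
    have h1 := key f G
    have h2 := hF G hG
    have h3 : ∑ j ∈ G, (v j) ^ 2 * ‖Θ j (gfProj W j f)‖ ^ 2 < ε ^ 2 / B :=
      lt_of_le_of_lt (le_abs_self _) (by rwa [Real.norm_eq_abs] at h2)
    have h4 : ‖∑ j ∈ G, S j f‖ ^ 2 < ε ^ 2 := by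
      calc ‖∑ j ∈ G, S j f‖ ^ 2 ≤ B * ∑ j ∈ G, (v j) ^ 2 * ‖Θ j (gfProj W j f)‖ ^ 2 := h1
        _ < B * (ε ^ 2 / B) := mul_lt_mul_of_pos_left h3 hB
        _ = ε ^ 2 := by field_simp
    nlinarith [norm_nonneg (∑ j ∈ G, S j f)]
  have hhas : ∀ f : H, HasSum (fun j => S j f) (∑' j, S j f) := fun f => (hsummable f).hasSum
  -- norm bound on the sums
  have hbound : ∀ f : H, ‖∑' j, S j f‖ ≤ Real.sqrt B * ‖f‖ := by
    intro f
    have hsq : ‖∑' j, S j f‖ ^ 2 ≤ B * ‖f‖ ^ 2 := by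
      have ht : Filter.Tendsto (fun F : Finset J => ‖∑ j ∈ F, S j f‖ ^ 2)
          Filter.atTop (nhds (‖∑' j, S j f‖ ^ 2)) := (hhas f).norm.pow 2
      refine le_of_tendsto ht (Filter.Eventually.of_forall fun F => ?_)
      refine (key f F).trans ?_
      have hle := sum_le_hasSum F (fun j _ => hΘnonneg f j) (hΘ_parseval f)
      exact mul_le_mul_of_nonneg_left hle hB.le
    calc ‖∑' j, S j f‖ = Real.sqrt (‖∑' j, S j f‖ ^ 2) := by
          rw [Real.sqrt_sq (norm_nonneg _)]
      _ ≤ Real.sqrt (B * ‖f‖ ^ 2) := Real.sqrt_le_sqrt hsq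
      _ = Real.sqrt B * ‖f‖ := by
          rw [Real.sqrt_mul hB.le, Real.sqrt_sq (norm_nonneg _)]
  -- the operator V
  let Vlin : H →ₗ[ℂ] H :=
    { toFun := fun f => ∑' j, S j f
      map_add' := by
        intro f g
        simp only [map_add]
        exact Summable.tsum_add (hsummable f) (hsummable g)
      map_smul' := by
        intro c f
        simp only [map_smul, RingHom.id_apply]
        exact Summable.tsum_const_smul c (hsummable f) }
  let V : H →L[ℂ] H := Vlin.mkContinuous (Real.sqrt B) (fun f => hbound f)
  have hVapp : ∀ f : H, V f = ∑' j, S j f := fun f => rfl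
  have hVnorm : ‖V‖ ≤ Real.sqrt B :=
    Vlin.mkContinuous_norm_le (Real.sqrt_nonneg B) (fun f => hbound f)
  have hVhas : ∀ f : H,
      HasSum (fun j => ((v j) ^ 2 : ℝ) •
        gfProj W j (adjoint (Λ j) (Θ j (gfProj W j f)))) (V f) := by
    intro f
    have h := hhas f
    rw [← hVapp] at h
    exact h
  -- evaluation of V on the canonical vectors
  have hVval : ∀ (i : J) (g : Hs i),
      V (gfProj W i (adjoint (Θ i) g)) = gfProj W i (adjoint (Λ i) g) := by
    intro i g
    set u : H := gfProj W i (adjoint (Θ i) g) with hu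
    have h := hhas u
    have heq : (fun j => S j u) = fun j => if j = i then gfProj W i (adjoint (Λ i) g) else 0 := by
      funext j
      by_cases hj : j = i
      · subst hj
        rw [hSapp, ← map_smul_of_tower, ← map_smul_of_tower, hu, hrecon]
        simp
      · rw [hSapp, hu, hcross i j (fun hh => hj hh.symm)]
        simp [hj]
    have h2 : HasSum (fun j => if j = i then gfProj W i (adjoint (Λ i) g) else 0)
        (gfProj W i (adjoint (Λ i) g)) := hasSum_ite_eq i _
    have h3 : HasSum (fun j => S j u) (gfProj W i (adjoint (Λ i) g)) := by
      rw [heq]; exact h2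
    rw [hVapp]
    exact h3.tsum_eq
  -- the factorisation identity
  have hfact : ∀ (j : J) (f : H), Λ j (gfProj W j f) = Θ j (gfProj W j (adjoint V f)) := by
    intro i f
    apply ext_inner_right ℂ
    intro g
    calc ⟪Λ i (gfProj W i f), g⟫_ℂ
        = ⟪f, gfProj W i (adjoint (Λ i) g)⟫_ℂ := by
          rw [← inner_conj_symm, ← hΛadj, inner_conj_symm]
      _ = ⟪f, V (gfProj W i (adjoint (Θ i) g))⟫_ℂ := by rw [hVval]
      _ = ⟪adjoint V f, gfProj W i (adjoint (Θ i) g)⟫_ℂ := (adjoint_inner_left V _ _).symm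
      _ = ⟪Θ i (gfProj W i (adjoint V f)), g⟫_ℂ := hΘadj i _ g
  -- lower bound for the adjoint
  have hlow : ∀ f : H, A * ‖f‖ ^ 2 ≤ ‖adjoint V f‖ ^ 2 := by
    intro f
    have hp := hΘ_parseval (adjoint V f)
    have heqf : (fun j => (v j) ^ 2 * ‖Θ j (gfProj W j (adjoint V f))‖ ^ 2)
        = fun j => (v j) ^ 2 * ‖Λ j (gfProj W j f)‖ ^ 2 := by
      funext j; rw [← hfact j f]
    rw [heqf] at hp
    have h2 := (hframe f).2.1
    rwa [hp.tsum_eq] at h2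
  set G : H →L[ℂ] H := V.comp (adjoint V) with hGdef
  have hGsa : adjoint G = G := by
    rw [hGdef, adjoint_comp, adjoint_adjoint]
  have hGlow : ∀ f : H, A * ‖f‖ ≤ ‖G f‖ := by
    intro f
    rcases eq_or_ne f 0 with rfl | hf
    · simp
    · have h1 : A * ‖f‖ ^ 2 ≤ ‖adjoint V f‖ ^ 2 := hlow f
      have h2 : ‖adjoint V f‖ ^ 2 = RCLike.re ⟪adjoint V f, adjoint V f⟫_ℂ :=
        (inner_self_eq_norm_sq _).symm
      have h3 : ⟪adjoint V f, adjoint V f⟫_ℂ = ⟪f, G f⟫_ℂ :=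
        adjoint_inner_left V (adjoint V f) f
      have h4 : RCLike.re ⟪f, G f⟫_ℂ ≤ ‖f‖ * ‖G f‖ :=
        (RCLike.re_le_norm _).trans (norm_inner_le_norm _ _)
      have h5 : A * ‖f‖ ^ 2 ≤ ‖f‖ * ‖G f‖ := by
        rw [h2, h3] at h1
        exact h1.trans h4
      have hfpos : 0 < ‖f‖ := norm_pos_iff.mpr hf
      nlinarith
  have hGinj : Function.Injective G := by
    intro x y hxy
    have hz : G (x - y) = 0 := by rw [map_sub, hxy, sub_self]
    have h := hGlow (x - y)
    rw [hz, norm_zero] at h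
    have hxy0 : ‖x - y‖ = 0 := le_antisymm (by nlinarith [norm_nonneg (x - y)]) (norm_nonneg _)
    have := norm_eq_zero.mp hxy0
    exact sub_eq_zero.mp this
  have hGanti : AntilipschitzWith (⟨A, hA.le⟩ : NNReal)⁻¹ G := by
    refine ContinuousLinearMap.antilipschitz_of_bound G fun x => ?_
    have h := hGlow x
    change ‖x‖ ≤ A⁻¹ * ‖G x‖
    rw [← le_div_iff₀' hA] at h
    simpa [div_eq_inv_mul] using h
  have hclosed : IsClosed (Set.range G) := hGanti.isClosed_range G.uniformContinuous
  have horth : (LinearMap.range (G : H →ₗ[ℂ] H))ᗮ = ⊥ := by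
    rw [Submodule.eq_bot_iff]
    intro x hx
    have hx' : ∀ z : H, ⟪G z, x⟫_ℂ = 0 := fun z =>
      (Submodule.mem_orthogonal _ x).mp hx (G z) (LinearMap.mem_range_self _ z)
    have hGx : G x = 0 := by
      apply ext_inner_right ℂ
      intro z
      rw [inner_zero_left, ← adjoint_inner_right, hGsa, ← inner_conj_symm, hx' z, map_zero]
    have := hGinj (hGx.trans (map_zero G).symm)
    exact this
  have hrange : LinearMap.range (G : H →ₗ[ℂ] H) = ⊤ := by
    have hcl : IsClosed ((LinearMap.range (G : H →ₗ[ℂ] H) : Submodule ℂ H) : Set H) := by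
      rw [LinearMap.coe_range]
      exact hclosed
    have h1 : (LinearMap.range (G : H →ₗ[ℂ] H)).topologicalClosure = LinearMap.range (G : H →ₗ[ℂ] H) :=
      IsClosed.submodule_topologicalClosure_eq hcl
    have h2 := Submodule.orthogonal_orthogonal_eq_closure (K := LinearMap.range (G : H →ₗ[ℂ] H))
    rw [horth, Submodule.bot_orthogonal_eq_top] at h2
    rw [← h1, ← h2]
  have hsurj : Function.Surjective V := by
    intro y
    have hy : y ∈ LinearMap.range (G : H →ₗ[ℂ] H) := by rw [hrange]; trivial
    obtain ⟨x, hx⟩ := hy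
    exact ⟨adjoint V x, hx⟩
  exact ⟨V, hsurj, hVnorm, hVhas, hfact⟩
end

section
/- Λ = (W_j, Λ_j, v_j) is a g-fusion frame for H with bounds A, B if and only if the induced sequence {u_{j,k} : j ∈ J, k ∈ K_j} is a frame for H with bounds A, B, i.e. A‖f‖² ≤ Σ_{j∈J} Σ_{k∈K_j} |⟨f, u_{j,k}⟩|² ≤ B‖f‖² for all f ∈ H. -/
open scoped InnerProductSpace
open ContinuousLinearMap

set_option maxHeartbeats 1000000 in
/-- `Λ = (W_j, Λ_j, v_j)` is a g-fusion frame for `H` with bounds `A, B` iff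
the induced sequence `{u_{j,k}}` is a frame for `H` with bounds `A, B`. -/
theorem gfusion_frame_iff_induced_frame
    {H : Type*} [NormedAddCommGroup H] [InnerProductSpace ℂ H] [CompleteSpace H]
    {J : Type*} [Countable J]
    {Hs : J → Type*} [∀ j, NormedAddCommGroup (Hs j)] [∀ j, InnerProductSpace ℂ (Hs j)]
    [∀ j, CompleteSpace (Hs j)]
    (W : J → Submodule ℂ H) [∀ j, CompleteSpace (W j)]
    (v : J → ℝ) (hv : ∀ j, 0 < v j)
    (Λ : ∀ j, H →L[ℂ] Hs j)
    (K : J → Type*) [∀ j, Countable (K j)]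
    (e : ∀ j, HilbertBasis (K j) ℂ (Hs j))
    (u : ∀ j, K j → H)
    (hu : ∀ j k, u j k = v j • gfProj W j (adjoint (Λ j) (e j k)))
    (A B : ℝ) (hA : 0 < A) (hAB : A ≤ B) :
    (∀ f : H,
        Summable (fun j => (v j) ^ 2 * ‖Λ j (gfProj W j f)‖ ^ 2) ∧
        A * ‖f‖ ^ 2 ≤ ∑' j, (v j) ^ 2 * ‖Λ j (gfProj W j f)‖ ^ 2 ∧
        ∑' j, (v j) ^ 2 * ‖Λ j (gfProj W j f)‖ ^ 2 ≤ B * ‖f‖ ^ 2)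
      ↔
    (∀ f : H,
        Summable (fun p : Σ j, K j => ‖⟪u p.1 p.2, f⟫_ℂ‖ ^ 2) ∧
        A * ‖f‖ ^ 2 ≤ ∑' p : Σ j, K j, ‖⟪u p.1 p.2, f⟫_ℂ‖ ^ 2 ∧
        ∑' p : Σ j, K j, ‖⟪u p.1 p.2, f⟫_ℂ‖ ^ 2 ≤ B * ‖f‖ ^ 2) := by
  -- key pointwise identity: ⟪u j k, f⟫ = (v j) * ⟪e j k, Λ j (gfProj W j f)⟫
  have hinner : ∀ (f : H) (j : J) (k : K j),
      ⟪u j k, f⟫_ℂ = (v j : ℂ) * ⟪e j k, Λ j (gfProj W j f)⟫_ℂ := by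
    intro f j k
    rw [hu, ← Complex.coe_smul, inner_smul_left, Complex.conj_ofReal]
    congr 1
    have hproj : ⟪gfProj W j (adjoint (Λ j) (e j k)), f⟫_ℂ
        = ⟪adjoint (Λ j) (e j k), gfProj W j f⟫_ℂ := by
      simpa [gfProj] using
        Submodule.inner_starProjection_left_eq_right (W j) (adjoint (Λ j) (e j k)) f
    rw [hproj, ContinuousLinearMap.adjoint_inner_left]
  -- fiberwise HasSum via Parseval
  have hfiber : ∀ (f : H) (j : J),
      HasSum (fun k : K j => ‖⟪u j k, f⟫_ℂ‖ ^ 2)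
        ((v j) ^ 2 * ‖Λ j (gfProj W j f)‖ ^ 2) := by
    intro f j
    set g := Λ j (gfProj W j f) with hg
    have h1 : HasSum (fun k : K j => ⟪g, e j k⟫_ℂ * ⟪e j k, g⟫_ℂ) ⟪g, g⟫_ℂ :=
      (e j).hasSum_inner_mul_inner g g
    have h2 : HasSum (fun k : K j => (⟪g, e j k⟫_ℂ * ⟪e j k, g⟫_ℂ).re) (⟪g, g⟫_ℂ).re :=
      (Complex.reCLM.hasSum h1)
    have h3 : HasSum (fun k : K j => ‖⟪e j k, g⟫_ℂ‖ ^ 2) (‖g‖ ^ 2) := by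
      convert h2 using 2 with k
      · rw [← inner_conj_symm g (e j k), Complex.conj_mul', ← Complex.ofReal_pow,
          Complex.ofReal_re]
      · rw [← RCLike.re_to_complex]
        exact (inner_self_eq_norm_sq g).symm
    have h4 := h3.mul_left ((v j) ^ 2)
    convert h4 using 2 with k
    case e'_3 => rfl
    rw [hinner f j k]
    rw [norm_mul, mul_pow]
    simp [abs_of_pos (hv j), hg]
  have hnn : ∀ (f : H) (p : Σ j, K j), (0:ℝ) ≤ ‖⟪u p.1 p.2, f⟫_ℂ‖ ^ 2 := by
    intro f p; positivity
  have hsum_iff : ∀ f : H,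
      Summable (fun p : Σ j, K j => ‖⟪u p.1 p.2, f⟫_ℂ‖ ^ 2) ↔
      Summable (fun j => (v j) ^ 2 * ‖Λ j (gfProj W j f)‖ ^ 2) := by
    intro f
    rw [summable_sigma_of_nonneg (hnn f)]
    constructor
    · rintro ⟨-, h⟩
      convert h using 1
      ext j
      exact ((hfiber f j).tsum_eq).symm
    · intro h
      refine ⟨fun j => (hfiber f j).summable, ?_⟩
      convert h using 1
      ext j
      exact (hfiber f j).tsum_eq
  have htsum : ∀ f : H,
      Summable (fun p : Σ j, K j => ‖⟪u p.1 p.2, f⟫_ℂ‖ ^ 2) →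
      ∑' p : Σ j, K j, ‖⟪u p.1 p.2, f⟫_ℂ‖ ^ 2
        = ∑' j, (v j) ^ 2 * ‖Λ j (gfProj W j f)‖ ^ 2 := by
    intro f hs
    rw [hs.tsum_sigma' (fun j => (hfiber f j).summable)]
    exact tsum_congr fun j => (hfiber f j).tsum_eq
  constructor
  · intro h f
    obtain ⟨hs, hl, hr⟩ := h f
    have hs' := (hsum_iff f).mpr hs
    rw [htsum f hs']
    exact ⟨hs', hl, hr⟩
  · intro h f
    obtain ⟨hs, hl, hr⟩ := h f
    rw [htsum f hs] at hl hr
    exact ⟨(hsum_iff f).mp hs, hl, hr⟩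
end
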